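/- In the setting where d(·,E)^{-α} ∈ A₁, the following pointwise free-hole inclusion holds: let B = B_d(y,r) with λ₀ := 1/(K_d(2K_d+1)), and suppose B_d(y,λ₀r) ∩ E ≠ ∅. Then for every x ∈ B_d(y,λ₀r) \ closure(E), setting t = d(x,E), one has B_d(x,t) ⊆ B \ E and hence ρ_{d,E}(B) ≥ d(x,E); consequently ρ_{d,E}(B)^{-α} ≤ ess inf_{λ₀B} d(·,E)^{-α} whenever μ(closure(E)) = 0. -/

import Mathlib

open MeasureTheory ENNReal Set

namespace WPA1

variable {X : Type*}

/-- `d` is a quasi-distance on `X` with triangular constant `K`. -/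
def QD (d : X → X → ℝ) (K : ℝ) : Prop :=
  1 ≤ K ∧ (∀ x y, 0 ≤ d x y) ∧ (∀ x y, d x y = 0 ↔ x = y) ∧
    (∀ x y, d x y = d y x) ∧ ∀ x y z, d x z ≤ K * (d x y + d y z)

/-- The `d`-ball of center `x` and radius `r`. -/
def ball (d : X → X → ℝ) (x : X) (r : ℝ) : Set X := {y | d x y < r}

/-- The optimal (least) triangular constant of `d`. -/
noncomputable def Kopt (d : X → X → ℝ) : ℝ := sInf {K | QD d K}

/-- Distance from a point to a set: `d(x,E) = inf_{e ∈ E} d(x,e)`. -/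
noncomputable def distE (d : X → X → ℝ) (E : Set X) (x : X) : ℝ :=
  sInf ((d x) '' E)

/-- The maximal `E`-free hole function
`ρ_{d,E}(B_d(x,r)) = sup {0 < s ≤ 2Kr : ∃ y, B_d(y,s) ⊆ B_d(x,r) \ E}`
(with value `0` when the set is empty, by `Real.sSup` conventions). -/
noncomputable def hole (d : X → X → ℝ) (K : ℝ) (E : Set X) (x : X) (r : ℝ) : ℝ :=
  sSup {s | 0 < s ∧ s ≤ 2 * K * r ∧ ∃ y, ball d y s ⊆ ball d x r \ E}

/-- The maximal hole function `ρ_{d,E}` is doubling with constant `C`. -/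
def HoleDoubling (d : X → X → ℝ) (K : ℝ) (E : Set X) (C : ℝ) : Prop :=
  ∀ x r, 0 < r → hole d K E x (2 * r) ≤ C * hole d K E x r

/-- The `d`-balls are open and form neighborhood bases: the ambient topology is
the one induced by the quasi-distance `d`. -/
def BallsBasis [TopologicalSpace X] (d : X → X → ℝ) : Prop :=
  (∀ x r, IsOpen (ball d x r)) ∧ ∀ x, ∀ U ∈ nhds x, ∃ r > 0, ball d x r ⊆ U

/-- The measure `μ` is doubling (with constant `A`) on `d`-balls, which have
positive finite measure; i.e. `(X,d,μ)` is a space of homogeneous type. -/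
def DoublingBalls [MeasurableSpace X] (μ : Measure X) (d : X → X → ℝ) (A : ℝ) : Prop :=
  ∀ x r, 0 < r → 0 < μ (ball d x r) ∧ μ (ball d x r) < ⊤ ∧
    μ (ball d x (2 * r)) ≤ ENNReal.ofReal A * μ (ball d x r)

/-- `E` is `(σ,γ)`-weakly porous with respect to `d` and `μ`. -/
def WeaklyPorousWith [MeasurableSpace X] (μ : Measure X) (d : X → X → ℝ) (K : ℝ)
    (E : Set X) (σ γ : ℝ) : Prop :=
  ∀ x r, 0 < r → ∃ (n : ℕ) (c : Fin n → X) (ρ : Fin n → ℝ),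
    (∀ i j, i ≠ j → Disjoint (ball d (c i) (ρ i)) (ball d (c j) (ρ j))) ∧
    (∀ i, ball d (c i) (ρ i) ⊆ ball d x r \ E) ∧
    (∀ i, γ * hole d K E x r ≤ ρ i) ∧
    (∀ i, ρ i ≤ 2 * K * r) ∧
    ENNReal.ofReal σ * μ (ball d x r) ≤ ∑ i, μ (ball d (c i) (ρ i))

/-- `E` is weakly porous with respect to `d` and `μ`. -/
def WeaklyPorous [MeasurableSpace X] (μ : Measure X) (d : X → X → ℝ) (K : ℝ)
    (E : Set X) : Prop :=
  ∃ σ γ : ℝ, σ ∈ Set.Ioo (0:ℝ) 1 ∧ γ ∈ Set.Ioo (0:ℝ) 1 ∧ WeaklyPorousWith μ d K E σ γ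

/-- The weight `d(·,E)^{-α}`, valued in `ℝ≥0∞` (so it is `∞` on `{d(·,E)=0}`). -/
noncomputable def wgt (d : X → X → ℝ) (E : Set X) (α : ℝ) (x : X) : ℝ≥0∞ :=
  ENNReal.ofReal (distE d E x) ^ (-α)

/-- `w` is an `A₁(X,d,μ)`-weight: `w` is locally integrable and the mean value of `w`
over every `d`-ball is bounded by a constant times its essential infimum there. -/
def MemA1 [MeasurableSpace X] (μ : Measure X) (d : X → X → ℝ) (w : X → ℝ≥0∞) : Prop :=
  (∀ x r, 0 < r → ∫⁻ y in ball d x r, w y ∂μ < ⊤) ∧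
  ∃ C : ℝ, 0 < C ∧ ∀ x r, 0 < r →
    ∫⁻ y in ball d x r, w y ∂μ ≤
      ENNReal.ofReal C * essInf w (μ.restrict (ball d x r)) * μ (ball d x r)


/-- Pointwise free-hole inclusion: with `λ₀ = 1/(K_d(2K_d+1))` and `λ₀B ∩ E ≠ ∅`,
for every `x ∈ λ₀B \ closure E` (with `t = d(x,E)`) one has `B_d(x,t) ⊆ B \ E`
and `ρ_{d,E}(B) ≥ d(x,E)`; consequently, if `μ(closure E) = 0`, then
`ρ_{d,E}(B)^{-α} ≤ ess inf_{λ₀B} d(·,E)^{-α}`. -/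
theorem statement12 {X : Type*} [TopologicalSpace X] [MeasurableSpace X] [BorelSpace X]
    (μ : Measure X) (d : X → X → ℝ) (K : ℝ) (hd : QD d K) (hb : BallsBasis d)
    (E : Set X) (hE : E.Nonempty) (y : X) (r : ℝ) (hr : 0 < r)
    (hmeet : (ball d y (r / (K * (2 * K + 1))) ∩ E).Nonempty) :
    (∀ x ∈ ball d y (r / (K * (2 * K + 1))) \ closure E,
      ball d x (distE d E x) ⊆ ball d y r \ E ∧ distE d E x ≤ hole d K E y r) ∧
    (∀ α : ℝ, 0 < α → μ (closure E) = 0 →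
      ENNReal.ofReal (hole d K E y r) ^ (-α) ≤
        essInf (wgt d E α) (μ.restrict (ball d y (r / (K * (2 * K + 1)))))) := by
  obtain ⟨hK1, hnn, heq0, hsymm, htri⟩ := hd
  have hKpos : (0:ℝ) < K := lt_of_lt_of_le one_pos hK1
  have hden : (0:ℝ) < K * (2 * K + 1) := by positivity
  set l := r / (K * (2 * K + 1)) with hl
  have hlpos : 0 < l := div_pos hr hden
  have hlr : K * (2 * K + 1) * l = r := by
    rw [hl]; field_simp
  have hlle : l ≤ r := by
    rw [hl]; exact div_le_self hr.le (by nlinarith)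
  obtain ⟨e, hel, heE⟩ := hmeet
  have main : ∀ x ∈ ball d y l \ closure E,
      ball d x (distE d E x) ⊆ ball d y r \ E ∧ distE d E x ≤ hole d K E y r := by
    intro x hx
    obtain ⟨hxB, hxC⟩ := hx
    have hxB' : d y x < l := hxB
    have heB : d y e < l := hel
    have hbdd : BddBelow ((d x) '' E) := ⟨0, by rintro _ ⟨e', _, rfl⟩; exact hnn x e'⟩
    have hne : ((d x) '' E).Nonempty := hE.image _
    set t := distE d E x with ht
    have htle : t ≤ d x e := csInf_le hbdd ⟨e, heE, rfl⟩
    have ht0 : 0 ≤ t := le_csInf hne (by rintro _ ⟨e', _, rfl⟩; exact hnn x e')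
    have htlt : t < 2 * K * l := by
      have h1 : d x e ≤ K * (d x y + d y e) := htri x y e
      have h2 : d x y = d y x := hsymm x y
      nlinarith
    have htpos : 0 < t := by
      rcases lt_or_eq_of_le ht0 with h | h
      · exact h
      · exfalso
        apply hxC
        rw [mem_closure_iff_nhds]
        intro U hU
        obtain ⟨s, hs, hsU⟩ := hb.2 x U hU
        have hts : t < s := by rw [← h]; exact hs
        have : sInf ((d x) '' E) < s := hts
        obtain ⟨v, hv, hvs⟩ := (csInf_lt_iff hbdd hne).mp this
        obtain ⟨e', he'E, rfl⟩ := hv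
        exact ⟨e', hsU hvs, he'E⟩
    have hsub : ball d x t ⊆ ball d y r \ E := by
      intro z hz
      have hz' : d x z < t := hz
      constructor
      · show d y z < r
        have h1 : d y z ≤ K * (d y x + d x z) := htri y x z
        nlinarith
      · intro hzE
        have : t ≤ d x z := csInf_le hbdd ⟨z, hzE, rfl⟩
        linarith
    refine ⟨hsub, ?_⟩
    have htS : t ∈ {s | 0 < s ∧ s ≤ 2 * K * r ∧ ∃ c, ball d c s ⊆ ball d y r \ E} :=
      ⟨htpos, by nlinarith, x, hsub⟩
    exact le_csSup ⟨2 * K * r, fun s hs => hs.2.1⟩ htS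
  refine ⟨main, ?_⟩
  intro α hα hμE
  apply le_essInf_of_ae_le (hfbdd := by isBoundedDefault)
  have hmeas : MeasurableSet (ball d y l) := (hb.1 y l).measurableSet
  have h1 : ∀ᵐ x ∂(μ.restrict (ball d y l)), x ∈ ball d y l := ae_restrict_mem hmeas
  have h2 : ∀ᵐ x ∂(μ.restrict (ball d y l)), x ∉ closure E := by
    rw [← measure_eq_zero_iff_ae_notMem]
    exact le_antisymm ((Measure.restrict_apply_le _ _).trans hμE.le) zero_le
  filter_upwards [h1, h2] with x hx1 hx2
  have hle : distE d E x ≤ hole d K E y r := (main x ⟨hx1, hx2⟩).2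
  show ENNReal.ofReal (hole d K E y r) ^ (-α) ≤ ENNReal.ofReal (distE d E x) ^ (-α)
  rw [ENNReal.rpow_neg, ENNReal.rpow_neg]
  exact ENNReal.inv_le_inv.mpr (ENNReal.rpow_le_rpow (ENNReal.ofReal_le_ofReal hle) hα.le)

end WPA1
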